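/- For the two objectives ℓ₁(θ) = 1 − exp(−‖θ − a‖²) and ℓ₂(θ) = 1 − exp(−‖θ + a‖²) with ‖a‖ = 1, any θ not lying on the segment between −a and a is Pareto dominated by its metric projection onto that segment. -/

import Mathlib

/-- Any point off the segment between `−a` and `a` is Pareto dominated by its
metric projection onto that segment. -/
theorem projection_dominates {d : ℕ}
    (a : EuclideanSpace ℝ (Fin d)) (ha : ‖a‖ = 1)
    (ℓ₁ ℓ₂ : EuclideanSpace ℝ (Fin d) → ℝ)
    (hℓ₁ : ℓ₁ = fun θ => 1 - Real.exp (-‖θ - a‖ ^ 2))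
    (hℓ₂ : ℓ₂ = fun θ => 1 - Real.exp (-‖θ + a‖ ^ 2))
    (seg : Set (EuclideanSpace ℝ (Fin d)))
    (hseg : seg = {x | ∃ s : ℝ, s ∈ Set.Icc (-1 : ℝ) 1 ∧ x = s • a})
    (θ p : EuclideanSpace ℝ (Fin d)) (hθ : θ ∉ seg)
    (hp : p ∈ seg) (hproj : ∀ q ∈ seg, ‖θ - p‖ ≤ ‖θ - q‖) :
    (ℓ₁ p ≤ ℓ₁ θ ∧ ℓ₂ p ≤ ℓ₂ θ) ∧ (ℓ₁ p < ℓ₁ θ ∨ ℓ₂ p < ℓ₂ θ) := by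
  have hconv : Convex ℝ seg := by
    rw [hseg]
    rintro x ⟨s, hs, rfl⟩ y ⟨t, ht, rfl⟩ α β hα hβ hαβ
    exact ⟨α * s + β * t, convex_Icc (-1 : ℝ) 1 hs ht hα hβ hαβ, by
      simp [smul_smul, add_smul]⟩
  have ha' : a ∈ seg := by
    rw [hseg]; exact ⟨1, by norm_num, (one_smul ℝ a).symm⟩
  have hna : -a ∈ seg := by
    rw [hseg]; exact ⟨-1, by norm_num, (neg_one_smul ℝ a).symm⟩
  -- variational inequality
  have hne : Nonempty seg := ⟨⟨p, hp⟩⟩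
  have hiInf : ‖θ - p‖ = ⨅ w : seg, ‖θ - w‖ := by
    apply le_antisymm
    · exact le_ciInf fun w => hproj w w.2
    · exact ciInf_le ⟨0, fun _ ⟨_, h⟩ => h ▸ norm_nonneg _⟩ (⟨p, hp⟩ : seg)
  have hvar : ∀ q ∈ seg, (inner ℝ (θ - p) (q - p) : ℝ) ≤ 0 :=
    (norm_eq_iInf_iff_real_inner_le_zero hconv hp).mp hiInf
  have hθp : θ - p ≠ 0 := by
    intro h
    exact hθ (by rwa [sub_eq_zero.mp h])
  -- key strict inequality
  have key : ∀ q ∈ seg, ‖p - q‖ < ‖θ - q‖ := by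
    intro q hq
    have h1 : ‖θ - q‖ ^ 2 = ‖θ - p‖ ^ 2 + 2 * (inner ℝ (θ - p) (p - q) : ℝ) + ‖p - q‖ ^ 2 := by
      have : θ - q = (θ - p) + (p - q) := by abel
      rw [this, norm_add_sq_real]
    have h2 : (inner ℝ (θ - p) (p - q) : ℝ) ≥ 0 := by
      have := hvar q hq
      have : (inner ℝ (θ - p) (p - q) : ℝ) = -(inner ℝ (θ - p) (q - p) : ℝ) := by
        rw [← inner_neg_right]; congr 1; abel
      linarith [hvar q hq]
    have h3 : 0 < ‖θ - p‖ := norm_pos_iff.mpr hθp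
    have : ‖p - q‖ ^ 2 < ‖θ - q‖ ^ 2 := by nlinarith
    exact lt_of_pow_lt_pow_left₀ 2 (norm_nonneg _) this
  have k1 : ‖p - a‖ < ‖θ - a‖ := key a ha'
  have k2 : ‖p + a‖ < ‖θ + a‖ := by
    have := key (-a) hna
    simpa [sub_neg_eq_add] using this
  have l1 : ℓ₁ p < ℓ₁ θ := by
    rw [hℓ₁]
    simp only [sub_lt_sub_iff_left]
    apply Real.exp_lt_exp.mpr
    have := pow_lt_pow_left₀ k1 (norm_nonneg _) two_ne_zero
    linarith
  have l2 : ℓ₂ p < ℓ₂ θ := by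
    rw [hℓ₂]
    simp only [sub_lt_sub_iff_left]
    apply Real.exp_lt_exp.mpr
    have := pow_lt_pow_left₀ k2 (norm_nonneg _) two_ne_zero
    linarith
  exact ⟨⟨l1.le, l2.le⟩, Or.inl l1⟩
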